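/- For jointly Gaussian real random variables defined by Y₁₁ = h₁₁X₁₁ + h₂₁X₂₁ + Z₁₁, Y_R = h₁RX₁₁ + h₂RX₂₁ + Z_R, Ŷ_R = Y_R + Z_Q, where X₁₁ ~ N(0,P₁₁), X₂₁ ~ N(0,P₂₁), Z₁₁ ~ N(0,1), Z_R ~ N(0,1), Z_Q ~ N(0,σ_Q²) are mutually independent, the mutual information satisfies I(X₁₁, X₂₁; Y₁₁, Ŷ_R) = (1/2)·log(1 + h₁₁²P₁₁ + h₂₁²P₂₁ + (h₁R²P₁₁ + h₂R²P₂₁ + (h₁₁h₂R − h₁Rh₂₁)²P₁₁P₂₁)/(1+σ_Q²)). -/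

import Mathlib

open Real Matrix

/-- Gaussian mutual information I(X₁₁,X₂₁; Y₁₁,Ŷ_R) for the half-duplex Gaussian MARC:
with Y₁₁ = h₁₁X₁₁ + h₂₁X₂₁ + Z₁₁, Y_R = h₁RX₁₁ + h₂RX₂₁ + Z_R, Ŷ_R = Y_R + Z_Q and
mutually independent zero-mean Gaussians of variances P₁₁, P₂₁, 1, 1, σ_Q², the mutual
information (1/2)·log(det Σ_A · det Σ_B / det Σ_AB) equals
(1/2)·log(1 + h₁₁²P₁₁ + h₂₁²P₂₁ + (h₁R²P₁₁ + h₂R²P₂₁ + (h₁₁h₂R−h₁Rh₂₁)²P₁₁P₂₁)/(1+σ_Q²)). -/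
theorem stmt10 (h11 h21 h1R h2R P11 P21 σQ2 : ℝ)
    (hP11 : 0 < P11) (hP21 : 0 < P21) (hσ : 0 < σQ2) :
    let vY11 : ℝ := h11 ^ 2 * P11 + h21 ^ 2 * P21 + 1
    let vYh : ℝ := h1R ^ 2 * P11 + h2R ^ 2 * P21 + 1 + σQ2
    let cYY : ℝ := h11 * h1R * P11 + h21 * h2R * P21
    let covA : Matrix (Fin 2) (Fin 2) ℝ := !![P11, 0; 0, P21]
    let covB : Matrix (Fin 2) (Fin 2) ℝ := !![vY11, cYY; cYY, vYh]
    let covAB : Matrix (Fin 4) (Fin 4) ℝ :=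
      !![P11, 0, h11 * P11, h1R * P11;
         0, P21, h21 * P21, h2R * P21;
         h11 * P11, h21 * P21, vY11, cYY;
         h1R * P11, h2R * P21, cYY, vYh]
    (1 / 2) * Real.log (covA.det * covB.det / covAB.det)
      = (1 / 2) * Real.log (1 + h11 ^ 2 * P11 + h21 ^ 2 * P21 +
          (h1R ^ 2 * P11 + h2R ^ 2 * P21 + (h11 * h2R - h1R * h21) ^ 2 * P11 * P21)
            / (1 + σQ2)) := by
  intro vY11 vYh cYY covA covB covAB
  have hAB : covAB.det = P11 * P21 * (1 + σQ2) := by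
    simp only [covAB, Matrix.det_succ_row_zero, Fin.sum_univ_succ,
      Matrix.det_fin_zero, Matrix.submatrix_apply, Matrix.cons_val', Matrix.cons_val_zero,
      Matrix.cons_val_one, Matrix.head_cons, Matrix.head_fin_const, Fin.succAbove,
      Matrix.cons_val_fin_one, Matrix.empty_val', Matrix.cons_val_succ,
      Fin.sum_univ_zero, vY11, vYh, cYY]
    norm_num [Fin.lt_def, show (Fin.castSucc 2 : Fin 4) = 2 from rfl,
      Matrix.cons_val_succ, Matrix.cons_val_zero, Matrix.cons_val_one, Matrix.head_cons,
      Matrix.cons_val]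
    simp (config := {decide := true}) [Matrix.vecHead, Matrix.vecTail]
    ring
  have hA : covA.det = P11 * P21 := by
    simp [covA, Matrix.det_fin_two_of]
  have hB : covB.det = (1 + σQ2) * (1 + h11 ^ 2 * P11 + h21 ^ 2 * P21 +
      (h1R ^ 2 * P11 + h2R ^ 2 * P21 + (h11 * h2R - h1R * h21) ^ 2 * P11 * P21)
        / (1 + σQ2)) := by
    have h1 : (1 : ℝ) + σQ2 ≠ 0 := by positivity
    simp [covB, Matrix.det_fin_two_of, vY11, vYh, cYY]
    field_simp
    ring
  rw [hA, hB, hAB]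
  have h1 : (1 : ℝ) + σQ2 ≠ 0 := by positivity
  have hp1 : P11 ≠ 0 := hP11.ne'
  have hp2 : P21 ≠ 0 := hP21.ne'
  congr 2
  field_simp
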